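/- Define g(r) = 4λ∫₀^{π/2} r⁴/(r² − sin²θ)^{3/2} dθ for r > 1 and λ > 0. Then g''(r) = 4λ r² ∫₀^{π/2} (3r² sin²θ + 12 sin⁴θ)/(r² − sin²θ)^{7/2} dθ > 0; i.e., g is strictly convex on (1, ∞). -/

import Mathlib

open Real Set Filter

/-- `g r = r³ V'(r)`, where `V` is the in-plane potential of the homogeneous unit circle
with density `lam`, outside the circle. -/
noncomputable def g (lam r : ℝ) : ℝ :=
  4 * lam * ∫ θ in (0:ℝ)..(π/2), r ^ 4 / (Real.sqrt (r ^ 2 - Real.sin θ ^ 2)) ^ 3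

section aux

lemma gsc_sqrt_pos {x θ : ℝ} (hx : 1 < x) : 0 < x^2 - Real.sin θ^2 := by
  nlinarith [Real.sin_sq_le_one θ]

lemma gsc_cont_den {x : ℝ} (hx : 1 < x) (n : ℕ) :
    Continuous (fun θ : ℝ => (Real.sqrt (x^2 - Real.sin θ^2))^n) :=
  (Real.continuous_sqrt.comp (by continuity)).pow n

lemma gsc_den_ne {x θ : ℝ} (hx : 1 < x) (n : ℕ) :
    (Real.sqrt (x^2 - Real.sin θ^2))^n ≠ 0 := by
  have := gsc_sqrt_pos (θ := θ) hx
  positivity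

lemma gsc_hasDerivAt_F1 {x s : ℝ} (h : s^2 < x^2) :
    HasDerivAt (fun y : ℝ => y^4 / (Real.sqrt (y^2 - s^2))^3)
      (x^3 * (x^2 - 4*s^2) / (Real.sqrt (x^2 - s^2))^5) x := by
  have hu : 0 < x^2 - s^2 := by linarith
  have hsq : 0 < Real.sqrt (x^2 - s^2) := Real.sqrt_pos.2 hu
  have hU : HasDerivAt (fun y : ℝ => y^2 - s^2) (2*x) x := by
    simpa using ((hasDerivAt_pow 2 x).sub_const (s^2))
  have hS : HasDerivAt (fun y : ℝ => Real.sqrt (y^2 - s^2))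
      ((2*x) / (2 * Real.sqrt (x^2 - s^2))) x := hU.sqrt hu.ne'
  have hD : HasDerivAt (fun y : ℝ => (Real.sqrt (y^2 - s^2))^3)
      (3 * (Real.sqrt (x^2 - s^2))^2 * ((2*x) / (2 * Real.sqrt (x^2 - s^2)))) x := by
    simpa using hS.fun_pow 3
  have hN : HasDerivAt (fun y : ℝ => y^4) (4*x^3) x := by
    simpa using hasDerivAt_pow 4 x
  have := hN.div hD (by positivity)
  refine this.congr_deriv (Eq.symm ?_)
  have h2 : Real.sqrt (x^2 - s^2) ^ 2 = x^2 - s^2 := Real.sq_sqrt hu.le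
  set t := Real.sqrt (x^2 - s^2) with ht
  field_simp
  linear_combination (-(4*x^3)) * h2

lemma gsc_hasDerivAt_F2 {x s : ℝ} (h : s^2 < x^2) :
    HasDerivAt (fun y : ℝ => y^3 * (y^2 - 4*s^2) / (Real.sqrt (y^2 - s^2))^5)
      (x^2 * ((3 * x^2 * s^2 + 12 * s^4) / (Real.sqrt (x^2 - s^2))^7)) x := by
  have hu : 0 < x^2 - s^2 := by linarith
  have hsq : 0 < Real.sqrt (x^2 - s^2) := Real.sqrt_pos.2 hu
  have hU : HasDerivAt (fun y : ℝ => y^2 - s^2) (2*x) x := by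
    simpa using ((hasDerivAt_pow 2 x).sub_const (s^2))
  have hS : HasDerivAt (fun y : ℝ => Real.sqrt (y^2 - s^2))
      ((2*x) / (2 * Real.sqrt (x^2 - s^2))) x := hU.sqrt hu.ne'
  have hD : HasDerivAt (fun y : ℝ => (Real.sqrt (y^2 - s^2))^5)
      (5 * (Real.sqrt (x^2 - s^2))^4 * ((2*x) / (2 * Real.sqrt (x^2 - s^2)))) x := by
    simpa using hS.fun_pow 5
  have hN : HasDerivAt (fun y : ℝ => y^3 * (y^2 - 4*s^2))
      (3*x^2 * (x^2 - 4*s^2) + x^3 * (2*x)) x := by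
    simpa using (hasDerivAt_pow 3 x).fun_mul ((hasDerivAt_pow 2 x).sub_const (4*s^2))
  have := hN.div hD (by positivity)
  refine this.congr_deriv (Eq.symm ?_)
  have h2 : Real.sqrt (x^2 - s^2) ^ 2 = x^2 - s^2 := Real.sq_sqrt hu.le
  set t := Real.sqrt (x^2 - s^2) with ht
  field_simp
  linear_combination (-(x^2*(5*x^2-12*s^2))) * h2

lemma gsc_hasDerivAt_param {F F' : ℝ → ℝ → ℝ} {r : ℝ} (hr : 1 < r) {C : ℝ}
    (hF_cont : ∀ x, 1 < x → Continuous (F x))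
    (hF'_cont : Continuous (F' r))
    (hbound : ∀ x ∈ Metric.ball r ((r-1)/2), ∀ t, ‖F' x t‖ ≤ C)
    (hdiff : ∀ t, ∀ x ∈ Metric.ball r ((r-1)/2), HasDerivAt (fun y => F y t) (F' x t) x) :
    HasDerivAt (fun x => ∫ t in (0:ℝ)..(π/2), F x t) (∫ t in (0:ℝ)..(π/2), F' r t) r := by
  have hε : (0:ℝ) < (r-1)/2 := by linarith
  have hmeas : ∀ᶠ x in nhds r, MeasureTheory.AEStronglyMeasurable (F x)
      (MeasureTheory.volume.restrict (Set.uIoc (0:ℝ) (π/2))) := by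
    filter_upwards [Ioi_mem_nhds hr] with x hx
    exact (hF_cont x hx).aestronglyMeasurable
  exact (intervalIntegral.hasDerivAt_integral_of_dominated_loc_of_deriv_le (Metric.ball_mem_nhds r hε) hmeas
    ((hF_cont r hr).intervalIntegrable _ _)
    hF'_cont.aestronglyMeasurable
    (Filter.Eventually.of_forall fun t _ x hx => hbound x hx t)
    (_root_.intervalIntegrable_const (c := C))
    (Filter.Eventually.of_forall fun t _ x hx => hdiff t x hx)).2

lemma gsc_ball_facts {r x : ℝ} (hr : 1 < r) (hx : x ∈ Metric.ball r ((r-1)/2)) :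
    (r+1)/2 < x ∧ x < (3*r-1)/2 ∧ 1 < x := by
  have hd := Metric.mem_ball.1 hx
  rw [Real.dist_eq, abs_sub_lt_iff] at hd
  refine ⟨by linarith [hd.1, hd.2], by linarith [hd.1, hd.2], by linarith [hd.1, hd.2]⟩

lemma gsc_bound1 {r x θ : ℝ} (hr : 1 < r) (hx : x ∈ Metric.ball r ((r-1)/2)) :
    ‖x^3 * (x^2 - 4*Real.sin θ^2) / (Real.sqrt (x^2 - Real.sin θ^2))^5‖ ≤
      ((3*r-1)/2)^3 * (((3*r-1)/2)^2 + 4) / (Real.sqrt (((r+1)/2)^2 - 1))^5 := by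
  obtain ⟨hx1, hx2, hx0⟩ := gsc_ball_facts hr hx
  have hs : Real.sin θ^2 ≤ 1 := Real.sin_sq_le_one θ
  have hs0 : 0 ≤ Real.sin θ^2 := sq_nonneg _
  have hc : 0 < ((r+1)/2)^2 - 1 := by nlinarith
  have hu : ((r+1)/2)^2 - 1 ≤ x^2 - Real.sin θ^2 := by nlinarith
  have hsc : Real.sqrt (((r+1)/2)^2 - 1) ≤ Real.sqrt (x^2 - Real.sin θ^2) :=
    Real.sqrt_le_sqrt hu
  have hscpos : 0 < Real.sqrt (((r+1)/2)^2 - 1) := Real.sqrt_pos.2 hc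
  rw [Real.norm_eq_abs, abs_div]
  have hden : (Real.sqrt (((r+1)/2)^2 - 1))^5 ≤ |(Real.sqrt (x^2 - Real.sin θ^2))^5| := by
    rw [abs_of_nonneg (by positivity)]
    exact pow_le_pow_left₀ hscpos.le hsc 5
  have hb : (0:ℝ) < (3*r-1)/2 := by linarith
  apply div_le_div₀ (mul_nonneg (pow_nonneg hb.le 3) (by positivity)) _ (by positivity) hden
  rw [abs_mul]
  have h1 : |x^3| ≤ ((3*r-1)/2)^3 := by
    rw [abs_of_nonneg (by positivity)]
    exact pow_le_pow_left₀ (by linarith) hx2.le 3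
  have h2 : |x^2 - 4*Real.sin θ^2| ≤ ((3*r-1)/2)^2 + 4 := by
    rw [abs_le]
    constructor <;> nlinarith
  exact mul_le_mul h1 h2 (abs_nonneg _) (pow_nonneg hb.le 3)

lemma gsc_bound2 {r x θ : ℝ} (hr : 1 < r) (hx : x ∈ Metric.ball r ((r-1)/2)) :
    ‖x^2 * ((3 * x^2 * Real.sin θ^2 + 12 * Real.sin θ^4) /
        (Real.sqrt (x^2 - Real.sin θ^2))^7)‖ ≤
      ((3*r-1)/2)^2 * ((3*((3*r-1)/2)^2 + 12) / (Real.sqrt (((r+1)/2)^2 - 1))^7) := by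
  obtain ⟨hx1, hx2, hx0⟩ := gsc_ball_facts hr hx
  have hs : Real.sin θ^2 ≤ 1 := Real.sin_sq_le_one θ
  have hs0 : 0 ≤ Real.sin θ^2 := sq_nonneg _
  have hs4 : Real.sin θ^4 ≤ 1 := by nlinarith
  have hc : 0 < ((r+1)/2)^2 - 1 := by nlinarith
  have hu : ((r+1)/2)^2 - 1 ≤ x^2 - Real.sin θ^2 := by nlinarith
  have hsc : Real.sqrt (((r+1)/2)^2 - 1) ≤ Real.sqrt (x^2 - Real.sin θ^2) :=
    Real.sqrt_le_sqrt hu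
  have hscpos : 0 < Real.sqrt (((r+1)/2)^2 - 1) := Real.sqrt_pos.2 hc
  rw [Real.norm_eq_abs, abs_mul, abs_div]
  have hden : (Real.sqrt (((r+1)/2)^2 - 1))^7 ≤ |(Real.sqrt (x^2 - Real.sin θ^2))^7| := by
    rw [abs_of_nonneg (by positivity)]
    exact pow_le_pow_left₀ hscpos.le hsc 7
  have h1 : |x^2| ≤ ((3*r-1)/2)^2 := by
    rw [abs_of_nonneg (by positivity)]
    exact pow_le_pow_left₀ (by linarith) hx2.le 2
  have h2 : |3 * x^2 * Real.sin θ^2 + 12 * Real.sin θ^4| ≤ 3*((3*r-1)/2)^2 + 12 := by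
    rw [abs_le]
    constructor <;> nlinarith [pow_le_pow_left₀ (by linarith : (0:ℝ) ≤ x) hx2.le 2]
  apply mul_le_mul h1 _ (by positivity) (by positivity)
  exact div_le_div₀ (by positivity) h2 (by positivity) hden

/-- The key derivative computations for `g`. -/
lemma gsc_hasDerivAt_g {lam r : ℝ} (hr : 1 < r) :
    HasDerivAt (g lam)
      (4 * lam * ∫ θ in (0:ℝ)..(π/2),
        r^3 * (r^2 - 4*Real.sin θ^2) / (Real.sqrt (r^2 - Real.sin θ^2))^5) r := by
  have h : HasDerivAt (fun x => ∫ θ in (0:ℝ)..(π/2),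
      x^4 / (Real.sqrt (x^2 - Real.sin θ^2))^3)
      (∫ θ in (0:ℝ)..(π/2),
        r^3 * (r^2 - 4*Real.sin θ^2) / (Real.sqrt (r^2 - Real.sin θ^2))^5) r := by
    apply gsc_hasDerivAt_param hr
    · intro x hx
      exact Continuous.div (by continuity) (gsc_cont_den hx 3) (fun θ => gsc_den_ne hx 3)
    · exact Continuous.div (by continuity) (gsc_cont_den hr 5) (fun θ => gsc_den_ne hr 5)
    · intro x hx θ
      exact gsc_bound1 hr hx
    · intro θ x hx
      obtain ⟨_, _, hx1⟩ := gsc_ball_facts hr hx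
      exact gsc_hasDerivAt_F1 (by nlinarith [Real.sin_sq_le_one θ])
  exact h.const_mul (4*lam)

lemma gsc_hasDerivAt_g' {lam r : ℝ} (hr : 1 < r) :
    HasDerivAt (fun x => 4 * lam * ∫ θ in (0:ℝ)..(π/2),
        x^3 * (x^2 - 4*Real.sin θ^2) / (Real.sqrt (x^2 - Real.sin θ^2))^5)
      (4 * lam * r ^ 2 * ∫ θ in (0:ℝ)..(π/2),
        (3 * r ^ 2 * Real.sin θ ^ 2 + 12 * Real.sin θ ^ 4) /
          (Real.sqrt (r ^ 2 - Real.sin θ ^ 2)) ^ 7) r := by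
  have h : HasDerivAt (fun x => ∫ θ in (0:ℝ)..(π/2),
      x^3 * (x^2 - 4*Real.sin θ^2) / (Real.sqrt (x^2 - Real.sin θ^2))^5)
      (∫ θ in (0:ℝ)..(π/2),
        r^2 * ((3 * r^2 * Real.sin θ^2 + 12 * Real.sin θ^4) /
          (Real.sqrt (r^2 - Real.sin θ^2))^7)) r := by
    apply gsc_hasDerivAt_param hr
    · intro x hx
      exact Continuous.div (by continuity) (gsc_cont_den hx 5) (fun θ => gsc_den_ne hx 5)
    · exact Continuous.mul continuous_const
        (Continuous.div (by continuity) (gsc_cont_den hr 7) (fun θ => gsc_den_ne hr 7))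
    · intro x hx θ
      exact gsc_bound2 hr hx
    · intro θ x hx
      obtain ⟨_, _, hx1⟩ := gsc_ball_facts hr hx
      exact gsc_hasDerivAt_F2 (by nlinarith [Real.sin_sq_le_one θ])
  rw [intervalIntegral.integral_const_mul] at h
  have h2 := h.const_mul (4*lam)
  rw [← mul_assoc] at h2
  exact h2

lemma gsc_integral_pos {r : ℝ} (hr : 1 < r) :
    0 < ∫ θ in (0:ℝ)..(π/2),
      (3 * r ^ 2 * Real.sin θ ^ 2 + 12 * Real.sin θ ^ 4) /
        (Real.sqrt (r ^ 2 - Real.sin θ ^ 2)) ^ 7 := by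
  apply intervalIntegral.intervalIntegral_pos_of_pos_on
  · exact (Continuous.div (by continuity) (gsc_cont_den hr 7)
      (fun θ => gsc_den_ne hr 7)).intervalIntegrable _ _
  · intro θ hθ
    have hsin : 0 < Real.sin θ := Real.sin_pos_of_pos_of_lt_pi hθ.1
      (by linarith [hθ.2, Real.pi_pos])
    have hden : 0 < Real.sqrt (r^2 - Real.sin θ^2) := Real.sqrt_pos.2 (gsc_sqrt_pos hr)
    have hr0 : (0:ℝ) < r := by linarith
    positivity
  · positivity

end aux

theorem g_strictConvex (lam : ℝ) (hlam : 0 < lam) :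
    StrictConvexOn ℝ (Set.Ioi 1) (g lam) ∧
    ∀ r ∈ Set.Ioi (1:ℝ),
      HasDerivAt (deriv (g lam))
        (4 * lam * r ^ 2 * ∫ θ in (0:ℝ)..(π/2),
          (3 * r ^ 2 * Real.sin θ ^ 2 + 12 * Real.sin θ ^ 4) /
            (Real.sqrt (r ^ 2 - Real.sin θ ^ 2)) ^ 7) r ∧
      0 < 4 * lam * r ^ 2 * ∫ θ in (0:ℝ)..(π/2),
          (3 * r ^ 2 * Real.sin θ ^ 2 + 12 * Real.sin θ ^ 4) /
            (Real.sqrt (r ^ 2 - Real.sin θ ^ 2)) ^ 7 := by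
  have key : ∀ r ∈ Set.Ioi (1:ℝ),
      HasDerivAt (deriv (g lam))
        (4 * lam * r ^ 2 * ∫ θ in (0:ℝ)..(π/2),
          (3 * r ^ 2 * Real.sin θ ^ 2 + 12 * Real.sin θ ^ 4) /
            (Real.sqrt (r ^ 2 - Real.sin θ ^ 2)) ^ 7) r := by
    intro r hr
    rw [Set.mem_Ioi] at hr
    have heq : deriv (g lam) =ᶠ[nhds r]
        (fun x => 4 * lam * ∫ θ in (0:ℝ)..(π/2),
          x^3 * (x^2 - 4*Real.sin θ^2) / (Real.sqrt (x^2 - Real.sin θ^2))^5) := by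
      filter_upwards [Ioi_mem_nhds hr] with x hx
      exact (gsc_hasDerivAt_g (lam := lam) hx).deriv
    exact (gsc_hasDerivAt_g' hr).congr_of_eventuallyEq heq
  have pos : ∀ r ∈ Set.Ioi (1:ℝ),
      0 < 4 * lam * r ^ 2 * ∫ θ in (0:ℝ)..(π/2),
          (3 * r ^ 2 * Real.sin θ ^ 2 + 12 * Real.sin θ ^ 4) /
            (Real.sqrt (r ^ 2 - Real.sin θ ^ 2)) ^ 7 := by
    intro r hr
    rw [Set.mem_Ioi] at hr
    have := gsc_integral_pos hr
    have hr0 : (0:ℝ) < r := by linarith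
    positivity
  refine ⟨?_, fun r hr => ⟨key r hr, pos r hr⟩⟩
  apply strictConvexOn_of_deriv2_pos (convex_Ioi 1)
  · intro x hx
    exact ((gsc_hasDerivAt_g (lam := lam) hx).differentiableAt.continuousAt).continuousWithinAt
  · intro x hx
    rw [interior_Ioi] at hx
    have h2 : deriv (deriv (g lam)) x = 4 * lam * x ^ 2 * ∫ θ in (0:ℝ)..(π/2),
        (3 * x ^ 2 * Real.sin θ ^ 2 + 12 * Real.sin θ ^ 4) /
          (Real.sqrt (x ^ 2 - Real.sin θ ^ 2)) ^ 7 := (key x hx).deriv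
    show 0 < deriv^[2] (g lam) x
    have h3 : deriv^[2] (g lam) x = deriv (deriv (g lam)) x := by
      simp [Function.iterate_succ, Function.iterate_zero, Function.comp]
    rw [h3, h2]
    exact pos x hx
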